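/- Let d₁, d₂, N₁, N₂ be positive integers and identify ℂ^{d₁+d₂} = ℂ^{d₁} ⊕ ℂ^{d₂}. Let S₁ be an ensemble of N₁d₁ unit vectors lying in the subspace ℂ^{d₁} ⊕ 0 and S₂ an ensemble of N₂d₂ unit vectors lying in the subspace 0 ⊕ ℂ^{d₂}. Then the maximum state-estimation fidelity of the combined ensemble S₁ ∪ S₂ of N₁d₁ + N₂d₂ equally likely states, taken over strategies on ℂ^{d₁+d₂}, satisfies F^max_{S₁⊕S₂} = (N₁d₁ F^max_{S₁} + N₂d₂ F^max_{S₂})/(N₁d₁ + N₂d₂), where F^max_{S₁} and F^max_{S₂} are the maximum fidelities of S₁ and S₂ over strategies on ℂ^{d₁} and ℂ^{d₂} respectively. -/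

import Mathlib

open Matrix
open scoped BigOperators ComplexOrder

/-- The inner product ⟨x|y⟩ on ℂ^d. -/
noncomputable def qinner {d : ℕ} (x y : Fin d → ℂ) : ℂ := star x ⬝ᵥ y

/-- The set of average fidelities of all state-estimation strategies for the ensemble
of equally likely unit vectors `ψ s`; its supremum is the maximum fidelity F_S^max. -/
noncomputable def fidSet {n : ℕ} {S : Type} [Fintype S] (ψ : S → Fin n → ℂ) : Set ℝ :=
  {x | ∃ (m : ℕ) (M σ : Fin m → Matrix (Fin n) (Fin n) ℂ),
    (∀ k, (M k).PosSemidef) ∧ (∑ k, M k = 1) ∧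
    (∀ k, (σ k).PosSemidef ∧ (σ k).trace = 1) ∧
    x = (1 / (Fintype.card S : ℝ)) * ∑ k, ∑ s,
      (qinner (ψ s) (M k *ᵥ ψ s)).re * (qinner (ψ s) (σ k *ᵥ ψ s)).re}

namespace MaxFidAux

lemma quad_re_nonneg {n : ℕ} {M : Matrix (Fin n) (Fin n) ℂ} (hM : M.PosSemidef)
    (v : Fin n → ℂ) : 0 ≤ (star v ⬝ᵥ M *ᵥ v).re :=
  hM.re_dotProduct_nonneg v

lemma diag_eq_quad {n : ℕ} (M : Matrix (Fin n) (Fin n) ℂ) (i : Fin n) :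
    M i i = star (Pi.single (M := fun _ => ℂ) i 1) ⬝ᵥ M *ᵥ (Pi.single i 1) := by
  have hs : star (Pi.single (M := fun _ => ℂ) i 1) = Pi.single i 1 := by
    funext j
    rcases eq_or_ne j i with rfl | h
    · simp
    · simp [Pi.single_eq_of_ne h]
  rw [hs, mulVec_single, single_dotProduct]
  simp

lemma psd_diag_re_nonneg {n : ℕ} {M : Matrix (Fin n) (Fin n) ℂ} (hM : M.PosSemidef)
    (i : Fin n) : 0 ≤ (M i i).re := by
  rw [diag_eq_quad M i]
  exact quad_re_nonneg hM _

lemma psd_trace_re_nonneg {n : ℕ} {M : Matrix (Fin n) (Fin n) ℂ} (hM : M.PosSemidef) :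
    0 ≤ M.trace.re := by
  rw [trace, Complex.re_sum]
  exact Finset.sum_nonneg fun i _ => psd_diag_re_nonneg hM i

lemma herm_trace_real {n : ℕ} {M : Matrix (Fin n) (Fin n) ℂ} (hM : M.IsHermitian) :
    ((M.trace.re : ℂ)) = M.trace := by
  have him : M.trace.im = 0 := by
    rw [trace, Complex.im_sum]
    refine Finset.sum_eq_zero fun i _ => ?_
    have := congrFun (congrFun hM i) i
    have h2 : (starRingEnd ℂ) (M i i) = M i i := this
    rw [Complex.conj_eq_iff_im] at h2
    exact h2
  exact Complex.ext rfl him.symm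

lemma quad_povm_sum {n m : ℕ} (M : Fin m → Matrix (Fin n) (Fin n) ℂ)
    (hs : ∑ k, M k = 1) (v : Fin n → ℂ) :
    ∑ k, star v ⬝ᵥ (M k) *ᵥ v = star v ⬝ᵥ v := by
  have hmv : (∑ k, M k) *ᵥ v = ∑ k, (M k) *ᵥ v := by
    funext i
    simp only [mulVec, dotProduct, Finset.sum_apply, Matrix.sum_apply, Finset.sum_mul]
    exact Finset.sum_comm
  have hdp : star v ⬝ᵥ (∑ k, (M k) *ᵥ v) = ∑ k, star v ⬝ᵥ (M k) *ᵥ v := by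
    simp only [dotProduct, Finset.sum_apply, Finset.mul_sum]
    exact Finset.sum_comm
  rw [← hdp, ← hmv, hs, one_mulVec]

lemma density_quad_le_one {n : ℕ} {σ : Matrix (Fin n) (Fin n) ℂ} (hσ : σ.PosSemidef)
    (htr : σ.trace = 1) {v : Fin n → ℂ} (hv : star v ⬝ᵥ v = 1) :
    (star v ⬝ᵥ σ *ᵥ v).re ≤ 1 := by
  obtain ⟨C, rfl⟩ : ∃ C : Matrix (Fin n) (Fin n) ℂ, σ = Cᴴ * C := by
    open scoped MatrixOrder in exact CStarAlgebra.nonneg_iff_eq_star_mul_self.mp hσ.nonneg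
  have h1 : star v ⬝ᵥ (Cᴴ * C) *ᵥ v = star (C *ᵥ v) ⬝ᵥ (C *ᵥ v) := by
    rw [← mulVec_mulVec, dotProduct_mulVec, vecMul_conjTranspose, star_star]
  rw [h1]
  have hvn : ∑ j, Complex.normSq (v j) = 1 := by
    have : (star v ⬝ᵥ v).re = 1 := by rw [hv]; simp
    rw [← this]
    simp [dotProduct, Complex.re_sum, Complex.mul_re, Complex.normSq]
  have hquad : (star (C *ᵥ v) ⬝ᵥ (C *ᵥ v)).re = ∑ i, Complex.normSq ((C *ᵥ v) i) := by
    simp [dotProduct, Complex.re_sum, Complex.mul_re, Complex.normSq]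
  have htr' : (1:ℝ) = ∑ i, ∑ j, Complex.normSq (C j i) := by
    have : ((Cᴴ * C).trace).re = 1 := by rw [htr]; simp
    rw [← this]
    simp [trace, Matrix.mul_apply, diag, Complex.re_sum, conjTranspose_apply,
      Complex.mul_re, Complex.normSq]
  rw [hquad, htr']
  have key : ∀ i, Complex.normSq ((C *ᵥ v) i) ≤ ∑ j, Complex.normSq (C i j) := by
    intro i
    have habs : Norm.norm ((C *ᵥ v) i) ≤ ∑ j, Norm.norm (C i j) * Norm.norm (v j) := by
      have : (C *ᵥ v) i = ∑ j, C i j * v j := rfl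
      rw [this]
      calc Norm.norm (∑ j, C i j * v j) = ‖∑ j, C i j * v j‖ := rfl
        _ ≤ ∑ j, ‖C i j * v j‖ := norm_sum_le _ _
        _ = ∑ j, Norm.norm (C i j) * Norm.norm (v j) := by
              simp [norm_mul]
    have h2 : Complex.normSq ((C *ᵥ v) i) ≤ (∑ j, Norm.norm (C i j) * Norm.norm (v j)) ^ 2 := by
      rw [← Complex.sq_norm]
      exact pow_le_pow_left₀ (norm_nonneg _) habs 2
    refine h2.trans ?_
    have h3 := Finset.sum_mul_sq_le_sq_mul_sq Finset.univ
      (fun j => Norm.norm (C i j)) (fun j => Norm.norm (v j))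
    have h4 : ∑ j, Norm.norm (v j) ^ 2 = 1 := by
      rw [← hvn]
      exact Finset.sum_congr rfl fun j _ => Complex.sq_norm _
    have h5 : ∑ j, Norm.norm (C i j) ^ 2 = ∑ j, Complex.normSq (C i j) :=
      Finset.sum_congr rfl fun j _ => Complex.sq_norm _
    calc (∑ j, Norm.norm (C i j) * Norm.norm (v j)) ^ 2
        ≤ (∑ j, Norm.norm (C i j) ^ 2) * ∑ j, Norm.norm (v j) ^ 2 := h3
      _ = ∑ j, Complex.normSq (C i j) := by rw [h4, h5, mul_one]
  calc ∑ i, Complex.normSq ((C *ᵥ v) i) ≤ ∑ i, ∑ j, Complex.normSq (C i j) :=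
        Finset.sum_le_sum fun i _ => key i
    _ = ∑ i, ∑ j, Complex.normSq (C j i) := Finset.sum_comm

lemma fid_le_one {n : ℕ} {S : Type} [Fintype S] {ψ : S → Fin n → ℂ}
    (hψ : ∀ s, qinner (ψ s) (ψ s) = 1) {x : ℝ} (hx : x ∈ fidSet ψ) : x ≤ 1 := by
  obtain ⟨m, M, σ, hM, hsum, hσ, rfl⟩ := hx
  rcases Nat.eq_zero_or_pos (Fintype.card S) with hc | hc
  · haveI : IsEmpty S := Fintype.card_eq_zero_iff.mp hc
    simp
  have hcR : (0:ℝ) < (Fintype.card S : ℝ) := by exact_mod_cast hc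
  have key : ∑ k, ∑ s, (qinner (ψ s) (M k *ᵥ ψ s)).re * (qinner (ψ s) (σ k *ᵥ ψ s)).re
      ≤ (Fintype.card S : ℝ) := by
    have step1 : ∑ k, ∑ s, (qinner (ψ s) (M k *ᵥ ψ s)).re * (qinner (ψ s) (σ k *ᵥ ψ s)).re
        ≤ ∑ k, ∑ s, (qinner (ψ s) (M k *ᵥ ψ s)).re := by
      refine Finset.sum_le_sum fun k _ => Finset.sum_le_sum fun s _ => ?_
      refine mul_le_of_le_one_right (quad_re_nonneg (hM k) _) ?_
      exact density_quad_le_one (hσ k).1 (hσ k).2 (hψ s)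
    refine step1.trans ?_
    rw [Finset.sum_comm]
    have step2 : ∀ s, ∑ k, (qinner (ψ s) (M k *ᵥ ψ s)).re = 1 := by
      intro s
      have := quad_povm_sum M hsum (ψ s)
      have h2 : ∑ k, (qinner (ψ s) (M k *ᵥ ψ s)).re
          = (∑ k, star (ψ s) ⬝ᵥ (M k) *ᵥ (ψ s)).re := by
        rw [Complex.re_sum]; rfl
      rw [h2, this, ← qinner, hψ s]
      simp
    rw [Finset.sum_congr rfl fun s _ => step2 s]
    simp
  calc (1 / (Fintype.card S : ℝ)) * ∑ k, ∑ s, _ ≤ (1 / (Fintype.card S : ℝ)) * (Fintype.card S : ℝ) := by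
        refine mul_le_mul_of_nonneg_left key ?_
        positivity
    _ = 1 := by field_simp

lemma fidSet_bddAbove {n : ℕ} {S : Type} [Fintype S] {ψ : S → Fin n → ℂ}
    (hψ : ∀ s, qinner (ψ s) (ψ s) = 1) : BddAbove (fidSet ψ) :=
  ⟨1, fun _ hx => fid_le_one hψ hx⟩

lemma fidSet_nonempty {n : ℕ} (hn : 0 < n) {S : Type} [Fintype S] (ψ : S → Fin n → ℂ) :
    (fidSet ψ).Nonempty := by
  have hdiag : ((n:ℂ)⁻¹ • (1 : Matrix (Fin n) (Fin n) ℂ)) = diagonal (fun _ => (n:ℂ)⁻¹) := by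
    ext i j
    by_cases h : i = j <;> simp [h, one_apply, diagonal]
  have hnn : (0:ℂ) ≤ (n:ℂ)⁻¹ := by
    rw [show ((n:ℂ))⁻¹ = (((n:ℝ)⁻¹ : ℝ) : ℂ) by push_cast; ring]
    rw [Complex.zero_le_real]
    positivity
  refine ⟨_, 1, (fun _ => 1), (fun _ => ((n:ℂ)⁻¹ • 1)), fun _ => Matrix.PosSemidef.one, by simp,
    fun k => ⟨?_, ?_⟩, rfl⟩
  · rw [hdiag]
    exact PosSemidef.diagonal fun i => hnn
  · rw [trace_smul, trace_one]
    simp only [smul_eq_mul, Fintype.card_fin]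
    rw [inv_mul_cancel₀]
    exact_mod_cast hn.ne'

lemma complete_density {n : ℕ} (hn : 0 < n) {ρ : Matrix (Fin n) (Fin n) ℂ}
    (hρ : ρ.PosSemidef) (htr : ρ.trace.re ≤ 1) :
    ∃ τ : Matrix (Fin n) (Fin n) ℂ, τ.PosSemidef ∧ τ.trace = 1 ∧
      ∀ v, (star v ⬝ᵥ ρ *ᵥ v).re ≤ (star v ⬝ᵥ τ *ᵥ v).re := by
  have hd : (0:ℝ) < (n:ℝ) := by exact_mod_cast hn
  have h0 : 0 ≤ ρ.trace.re := psd_trace_re_nonneg hρ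
  set c : ℝ := (1 - ρ.trace.re) / (n:ℝ) with hc
  have hc0 : 0 ≤ c := by
    apply div_nonneg _ hd.le
    linarith
  have hDpsd : (diagonal (fun _ : Fin n => ((c:ℝ) : ℂ))).PosSemidef := by
    refine PosSemidef.diagonal fun i => ?_
    show (0:ℂ) ≤ ((c:ℝ) : ℂ)
    rw [Complex.zero_le_real]
    exact hc0
  refine ⟨ρ + diagonal (fun _ => ((c:ℝ) : ℂ)), hρ.add hDpsd, ?_, ?_⟩
  · rw [trace_add, ← herm_trace_real hρ.1, trace_diagonal]
    rw [Finset.sum_const, Finset.card_univ, Fintype.card_fin, nsmul_eq_mul]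
    have hre : ρ.trace.re + (n:ℝ) * c = 1 := by
      rw [hc]
      field_simp
      ring
    have := congrArg (fun r : ℝ => (r : ℂ)) hre
    push_cast at this ⊢
    linear_combination this
  · intro v
    have hsplit : star v ⬝ᵥ (ρ + diagonal (fun _ => ((c:ℝ) : ℂ))) *ᵥ v
        = star v ⬝ᵥ ρ *ᵥ v + star v ⬝ᵥ (diagonal (fun _ : Fin n => ((c:ℝ) : ℂ))) *ᵥ v := by
      rw [add_mulVec, dotProduct_add]
    rw [hsplit, Complex.add_re]
    have := quad_re_nonneg hDpsd v
    linarith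

section Blocks

variable {d₁ d₂ : ℕ}

noncomputable def emb1 (A : Matrix (Fin d₁) (Fin d₁) ℂ) :
    Matrix (Fin (d₁ + d₂)) (Fin (d₁ + d₂)) ℂ :=
  (fromBlocks A 0 0 0).submatrix finSumFinEquiv.symm finSumFinEquiv.symm

noncomputable def emb2 (B : Matrix (Fin d₂) (Fin d₂) ℂ) :
    Matrix (Fin (d₁ + d₂)) (Fin (d₁ + d₂)) ℂ :=
  (fromBlocks 0 0 0 B).submatrix finSumFinEquiv.symm finSumFinEquiv.symm

lemma dot_append_left (x : Fin d₁ → ℂ) :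
    star (Fin.append x (0 : Fin d₂ → ℂ)) ⬝ᵥ Fin.append x 0 = star x ⬝ᵥ x := by
  simp [dotProduct, Fin.sum_univ_add, Fin.append_left, Fin.append_right]

lemma dot_append_right (y : Fin d₂ → ℂ) :
    star (Fin.append (0 : Fin d₁ → ℂ) y) ⬝ᵥ Fin.append 0 y = star y ⬝ᵥ y := by
  simp [dotProduct, Fin.sum_univ_add, Fin.append_left, Fin.append_right]

lemma quad_append_left (M : Matrix (Fin (d₁ + d₂)) (Fin (d₁ + d₂)) ℂ) (x : Fin d₁ → ℂ) :
    star (Fin.append x (0 : Fin d₂ → ℂ)) ⬝ᵥ M *ᵥ Fin.append x 0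
      = star x ⬝ᵥ (M.submatrix (Fin.castAdd d₂) (Fin.castAdd d₂)) *ᵥ x := by
  simp [dotProduct, mulVec, Fin.sum_univ_add, Fin.append_left, Fin.append_right,
    submatrix_apply]

lemma quad_append_right (M : Matrix (Fin (d₁ + d₂)) (Fin (d₁ + d₂)) ℂ) (y : Fin d₂ → ℂ) :
    star (Fin.append (0 : Fin d₁ → ℂ) y) ⬝ᵥ M *ᵥ Fin.append 0 y
      = star y ⬝ᵥ (M.submatrix (Fin.natAdd d₁) (Fin.natAdd d₁)) *ᵥ y := by
  simp [dotProduct, mulVec, Fin.sum_univ_add, Fin.append_left, Fin.append_right,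
    submatrix_apply]

lemma quad_emb1 (A : Matrix (Fin d₁) (Fin d₁) ℂ) (v : Fin (d₁ + d₂) → ℂ) :
    star v ⬝ᵥ (emb1 A) *ᵥ v
      = star (fun i => v (Fin.castAdd d₂ i)) ⬝ᵥ A *ᵥ (fun i => v (Fin.castAdd d₂ i)) := by
  simp [emb1, dotProduct, mulVec, Fin.sum_univ_add, submatrix_apply]

lemma quad_emb2 (B : Matrix (Fin d₂) (Fin d₂) ℂ) (v : Fin (d₁ + d₂) → ℂ) :
    star v ⬝ᵥ (emb2 B) *ᵥ v
      = star (fun i => v (Fin.natAdd d₁ i)) ⬝ᵥ B *ᵥ (fun i => v (Fin.natAdd d₁ i)) := by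
  simp [emb2, dotProduct, mulVec, Fin.sum_univ_add, submatrix_apply]

lemma emb1_posSemidef {A : Matrix (Fin d₁) (Fin d₁) ℂ} (hA : A.PosSemidef) :
    (emb1 (d₂ := d₂) A).PosSemidef := by
  rw [posSemidef_iff_dotProduct_mulVec]
  constructor
  · have h : (fromBlocks A 0 0 0 : Matrix (Fin d₁ ⊕ Fin d₂) (Fin d₁ ⊕ Fin d₂) ℂ).IsHermitian := by
      rw [Matrix.IsHermitian, fromBlocks_conjTranspose]
      simp [hA.1.eq]
    exact h.submatrix _
  · intro v
    rw [quad_emb1]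
    exact (posSemidef_iff_dotProduct_mulVec.mp hA).2 _

lemma emb2_posSemidef {B : Matrix (Fin d₂) (Fin d₂) ℂ} (hB : B.PosSemidef) :
    (emb2 (d₁ := d₁) B).PosSemidef := by
  rw [posSemidef_iff_dotProduct_mulVec]
  constructor
  · have h : (fromBlocks 0 0 0 B : Matrix (Fin d₁ ⊕ Fin d₂) (Fin d₁ ⊕ Fin d₂) ℂ).IsHermitian := by
      rw [Matrix.IsHermitian, fromBlocks_conjTranspose]
      simp [hB.1.eq]
    exact h.submatrix _
  · intro v
    rw [quad_emb2]
    exact (posSemidef_iff_dotProduct_mulVec.mp hB).2 _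

lemma emb1_trace (A : Matrix (Fin d₁) (Fin d₁) ℂ) : (emb1 (d₂ := d₂) A).trace = A.trace := by
  simp [emb1, trace, diag, Fin.sum_univ_add, submatrix_apply]

lemma emb2_trace (B : Matrix (Fin d₂) (Fin d₂) ℂ) : (emb2 (d₁ := d₁) B).trace = B.trace := by
  simp [emb2, trace, diag, Fin.sum_univ_add, submatrix_apply]

lemma emb1_sum {m : ℕ} (f : Fin m → Matrix (Fin d₁) (Fin d₁) ℂ) :
    emb1 (d₂ := d₂) (∑ k, f k) = ∑ k, emb1 (f k) := by
  ext i j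
  rcases h1 : finSumFinEquiv.symm i with p | p <;> rcases h2 : finSumFinEquiv.symm j with q | q <;>
    simp [emb1, submatrix_apply, h1, h2, Matrix.sum_apply]

lemma emb2_sum {m : ℕ} (f : Fin m → Matrix (Fin d₂) (Fin d₂) ℂ) :
    emb2 (d₁ := d₁) (∑ k, f k) = ∑ k, emb2 (f k) := by
  ext i j
  rcases h1 : finSumFinEquiv.symm i with p | p <;> rcases h2 : finSumFinEquiv.symm j with q | q <;>
    simp [emb2, submatrix_apply, h1, h2, Matrix.sum_apply]

lemma emb_one_add_emb_one :
    emb1 (1 : Matrix (Fin d₁) (Fin d₁) ℂ) + emb2 (1 : Matrix (Fin d₂) (Fin d₂) ℂ) = 1 := by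
  have h : (fromBlocks (1 : Matrix (Fin d₁) (Fin d₁) ℂ) 0 0 0)
      + fromBlocks 0 0 0 (1 : Matrix (Fin d₂) (Fin d₂) ℂ) = 1 := by
    rw [fromBlocks_add, ← fromBlocks_one]
    simp
  have h2 : emb1 (d₂ := d₂) 1 + emb2 1
      = ((fromBlocks (1 : Matrix (Fin d₁) (Fin d₁) ℂ) 0 0 0
          + fromBlocks 0 0 0 (1 : Matrix (Fin d₂) (Fin d₂) ℂ))).submatrix
            finSumFinEquiv.symm finSumFinEquiv.symm := by
    ext i j
    simp [emb1, emb2, submatrix_apply, Matrix.add_apply]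
  rw [h2, h, submatrix_one_equiv]

lemma blk1_one :
    ((1 : Matrix (Fin (d₁ + d₂)) (Fin (d₁ + d₂)) ℂ).submatrix (Fin.castAdd d₂) (Fin.castAdd d₂))
      = 1 := by
  ext i j
  simp [submatrix_apply, one_apply, Fin.castAdd_inj]

lemma blk2_one :
    ((1 : Matrix (Fin (d₁ + d₂)) (Fin (d₁ + d₂)) ℂ).submatrix (Fin.natAdd d₁) (Fin.natAdd d₁))
      = 1 := by
  ext i j
  have hinj : (Fin.natAdd d₁ i = Fin.natAdd d₁ j) ↔ i = j := by
    constructor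
    · intro h
      ext
      have := congrArg Fin.val h
      simpa using this
    · rintro rfl; rfl
  simp [submatrix_apply, one_apply, hinj]

lemma blk1_sum {m : ℕ} (f : Fin m → Matrix (Fin (d₁ + d₂)) (Fin (d₁ + d₂)) ℂ) :
    (∑ k, f k).submatrix (Fin.castAdd d₂) (Fin.castAdd d₂)
      = ∑ k, (f k).submatrix (Fin.castAdd d₂) (Fin.castAdd d₂) := by
  ext i j
  simp [submatrix_apply, Matrix.sum_apply]

lemma blk2_sum {m : ℕ} (f : Fin m → Matrix (Fin (d₁ + d₂)) (Fin (d₁ + d₂)) ℂ) :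
    (∑ k, f k).submatrix (Fin.natAdd d₁) (Fin.natAdd d₁)
      = ∑ k, (f k).submatrix (Fin.natAdd d₁) (Fin.natAdd d₁) := by
  ext i j
  simp [submatrix_apply, Matrix.sum_apply]

lemma trace_blocks (M : Matrix (Fin (d₁ + d₂)) (Fin (d₁ + d₂)) ℂ) :
    M.trace = (M.submatrix (Fin.castAdd d₂) (Fin.castAdd d₂)).trace
      + (M.submatrix (Fin.natAdd d₁) (Fin.natAdd d₁)).trace := by
  simp [trace, diag, Fin.sum_univ_add, submatrix_apply]

lemma quad_emb1_append_left (A : Matrix (Fin d₁) (Fin d₁) ℂ) (x : Fin d₁ → ℂ) :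
    star (Fin.append x (0 : Fin d₂ → ℂ)) ⬝ᵥ (emb1 A) *ᵥ Fin.append x 0 = star x ⬝ᵥ A *ᵥ x := by
  have h : (fun i => Fin.append x (0 : Fin d₂ → ℂ) (Fin.castAdd d₂ i)) = x :=
    funext fun i => Fin.append_left _ _ _
  rw [quad_emb1, h]

lemma quad_emb1_append_right (A : Matrix (Fin d₁) (Fin d₁) ℂ) (y : Fin d₂ → ℂ) :
    star (Fin.append (0 : Fin d₁ → ℂ) y) ⬝ᵥ (emb1 A) *ᵥ Fin.append 0 y = 0 := by
  have h : (fun i => Fin.append (0 : Fin d₁ → ℂ) y (Fin.castAdd d₂ i)) = (0 : Fin d₁ → ℂ) :=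
    funext fun i => Fin.append_left _ _ _
  rw [quad_emb1, h]
  simp

lemma quad_emb2_append_right (B : Matrix (Fin d₂) (Fin d₂) ℂ) (y : Fin d₂ → ℂ) :
    star (Fin.append (0 : Fin d₁ → ℂ) y) ⬝ᵥ (emb2 B) *ᵥ Fin.append 0 y = star y ⬝ᵥ B *ᵥ y := by
  have h : (fun i => Fin.append (0 : Fin d₁ → ℂ) y (Fin.natAdd d₁ i)) = y :=
    funext fun i => Fin.append_right _ _ _
  rw [quad_emb2, h]

lemma quad_emb2_append_left (B : Matrix (Fin d₂) (Fin d₂) ℂ) (x : Fin d₁ → ℂ) :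
    star (Fin.append x (0 : Fin d₂ → ℂ)) ⬝ᵥ (emb2 B) *ᵥ Fin.append x 0 = 0 := by
  have h : (fun i => Fin.append x (0 : Fin d₂ → ℂ) (Fin.natAdd d₁ i)) = (0 : Fin d₂ → ℂ) :=
    funext fun i => Fin.append_right _ _ _
  rw [quad_emb2, h]
  simp

lemma combo_mem {S₁ S₂ : Type} [Fintype S₁] [Fintype S₂]
    {ψ₁ : S₁ → Fin d₁ → ℂ} {ψ₂ : S₂ → Fin d₂ → ℂ} {x₁ x₂ : ℝ}
    (hc₁ : 0 < Fintype.card S₁) (hc₂ : 0 < Fintype.card S₂)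
    (h₁ : x₁ ∈ fidSet ψ₁) (h₂ : x₂ ∈ fidSet ψ₂) :
    ((Fintype.card S₁ : ℝ) * x₁ + (Fintype.card S₂ : ℝ) * x₂)
        / ((Fintype.card S₁ : ℝ) + (Fintype.card S₂ : ℝ))
      ∈ fidSet (Sum.elim (fun s => Fin.append (ψ₁ s) (0 : Fin d₂ → ℂ))
          (fun s => Fin.append (0 : Fin d₁ → ℂ) (ψ₂ s))) := by
  classical
  obtain ⟨m₁, M₁, σ₁, hM₁, hs₁, hσ₁, hx₁⟩ := h₁
  obtain ⟨m₂, M₂, σ₂, hM₂, hs₂, hσ₂, hx₂⟩ := h₂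
  set c₁ : ℝ := (Fintype.card S₁ : ℝ) with hc₁def
  set c₂ : ℝ := (Fintype.card S₂ : ℝ) with hc₂def
  have hc₁R : (0:ℝ) < c₁ := by rw [hc₁def]; exact_mod_cast hc₁
  have hc₂R : (0:ℝ) < c₂ := by rw [hc₂def]; exact_mod_cast hc₂
  refine ⟨m₁ + m₂, Fin.append (fun k => emb1 (M₁ k)) (fun k => emb2 (M₂ k)),
    Fin.append (fun k => emb1 (σ₁ k)) (fun k => emb2 (σ₂ k)), ?_, ?_, ?_, ?_⟩
  · intro k
    refine Fin.addCases (fun k' => ?_) (fun k' => ?_) k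
    · rw [Fin.append_left]; exact emb1_posSemidef (hM₁ k')
    · rw [Fin.append_right]; exact emb2_posSemidef (hM₂ k')
  · rw [Fin.sum_univ_add]
    simp only [Fin.append_left, Fin.append_right]
    rw [← emb1_sum, ← emb2_sum, hs₁, hs₂, emb_one_add_emb_one]
  · intro k
    refine Fin.addCases (fun k' => ?_) (fun k' => ?_) k
    · rw [Fin.append_left]
      exact ⟨emb1_posSemidef (hσ₁ k').1, by rw [emb1_trace]; exact (hσ₁ k').2⟩
    · rw [Fin.append_right]
      exact ⟨emb2_posSemidef (hσ₂ k').1, by rw [emb2_trace]; exact (hσ₂ k').2⟩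
  · simp only [qinner] at hx₁ hx₂ ⊢
    rw [Fin.sum_univ_add]
    simp only [Fin.append_left, Fin.append_right, Fintype.sum_sum_type,
      Sum.elim_inl, Sum.elim_inr, quad_emb1_append_left, quad_emb1_append_right,
      quad_emb2_append_left, quad_emb2_append_right, Complex.zero_re, zero_mul, mul_zero,
      Finset.sum_const_zero, add_zero, zero_add]
    have hT₁ : ∑ k, ∑ s, (star (ψ₁ s) ⬝ᵥ (M₁ k) *ᵥ ψ₁ s).re * (star (ψ₁ s) ⬝ᵥ (σ₁ k) *ᵥ ψ₁ s).re
        = c₁ * x₁ := by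
      rw [hx₁]; field_simp
    have hT₂ : ∑ k, ∑ s, (star (ψ₂ s) ⬝ᵥ (M₂ k) *ᵥ ψ₂ s).re * (star (ψ₂ s) ⬝ᵥ (σ₂ k) *ᵥ ψ₂ s).re
        = c₂ * x₂ := by
      rw [hx₂]; field_simp
    rw [Fintype.card_sum]
    push_cast
    rw [hT₁, hT₂]
    field_simp
    rfl

lemma mem_le_bound {S₁ S₂ : Type} [Fintype S₁] [Fintype S₂]
    {ψ₁ : S₁ → Fin d₁ → ℂ} {ψ₂ : S₂ → Fin d₂ → ℂ}
    (hd₁ : 0 < d₁) (hd₂ : 0 < d₂)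
    (hc₁ : 0 < Fintype.card S₁) (hc₂ : 0 < Fintype.card S₂)
    (hψ₁ : ∀ s, qinner (ψ₁ s) (ψ₁ s) = 1) (hψ₂ : ∀ s, qinner (ψ₂ s) (ψ₂ s) = 1)
    {x : ℝ} (hx : x ∈ fidSet (Sum.elim (fun s => Fin.append (ψ₁ s) (0 : Fin d₂ → ℂ))
          (fun s => Fin.append (0 : Fin d₁ → ℂ) (ψ₂ s)))) :
    x ≤ ((Fintype.card S₁ : ℝ) * sSup (fidSet ψ₁) + (Fintype.card S₂ : ℝ) * sSup (fidSet ψ₂))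
        / ((Fintype.card S₁ : ℝ) + (Fintype.card S₂ : ℝ)) := by
  classical
  obtain ⟨m, M, σ, hM, hsum, hσ, rfl⟩ := hx
  have hc₁R : (0:ℝ) < (Fintype.card S₁ : ℝ) := by exact_mod_cast hc₁
  have hc₂R : (0:ℝ) < (Fintype.card S₂ : ℝ) := by exact_mod_cast hc₂
  have hsApsd : ∀ k, ((σ k).submatrix (Fin.castAdd d₂) (Fin.castAdd d₂)).PosSemidef :=
    fun k => (hσ k).1.submatrix _
  have hsBpsd : ∀ k, ((σ k).submatrix (Fin.natAdd d₁) (Fin.natAdd d₁)).PosSemidef :=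
    fun k => (hσ k).1.submatrix _
  have htsum : ∀ k, ((σ k).submatrix (Fin.castAdd d₂) (Fin.castAdd d₂)).trace.re
      + ((σ k).submatrix (Fin.natAdd d₁) (Fin.natAdd d₁)).trace.re = 1 := by
    intro k
    have h := trace_blocks (σ k)
    rw [(hσ k).2] at h
    have h2 := congrArg Complex.re h
    simpa using h2.symm
  have hle₁ : ∀ k, ((σ k).submatrix (Fin.castAdd d₂) (Fin.castAdd d₂)).trace.re ≤ 1 := by
    intro k
    have := psd_trace_re_nonneg (hsBpsd k)
    linarith [htsum k]
  have hle₂ : ∀ k, ((σ k).submatrix (Fin.natAdd d₁) (Fin.natAdd d₁)).trace.re ≤ 1 := by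
    intro k
    have := psd_trace_re_nonneg (hsApsd k)
    linarith [htsum k]
  choose τ₁ hτ₁psd hτ₁tr hτ₁q using fun k => complete_density hd₁ (hsApsd k) (hle₁ k)
  choose τ₂ hτ₂psd hτ₂tr hτ₂q using fun k => complete_density hd₂ (hsBpsd k) (hle₂ k)
  have hmem₁ : (1 / (Fintype.card S₁ : ℝ)) * ∑ k, ∑ s,
      (star (ψ₁ s) ⬝ᵥ ((M k).submatrix (Fin.castAdd d₂) (Fin.castAdd d₂)) *ᵥ ψ₁ s).re
        * (star (ψ₁ s) ⬝ᵥ (τ₁ k) *ᵥ ψ₁ s).re ∈ fidSet ψ₁ :=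
    ⟨m, fun k => (M k).submatrix (Fin.castAdd d₂) (Fin.castAdd d₂), τ₁,
      fun k => (hM k).submatrix _, by rw [← blk1_sum, hsum, blk1_one],
      fun k => ⟨hτ₁psd k, hτ₁tr k⟩, rfl⟩
  have hmem₂ : (1 / (Fintype.card S₂ : ℝ)) * ∑ k, ∑ s,
      (star (ψ₂ s) ⬝ᵥ ((M k).submatrix (Fin.natAdd d₁) (Fin.natAdd d₁)) *ᵥ ψ₂ s).re
        * (star (ψ₂ s) ⬝ᵥ (τ₂ k) *ᵥ ψ₂ s).re ∈ fidSet ψ₂ :=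
    ⟨m, fun k => (M k).submatrix (Fin.natAdd d₁) (Fin.natAdd d₁), τ₂,
      fun k => (hM k).submatrix _, by rw [← blk2_sum, hsum, blk2_one],
      fun k => ⟨hτ₂psd k, hτ₂tr k⟩, rfl⟩
  have hF₁ := le_csSup (fidSet_bddAbove hψ₁) hmem₁
  have hF₂ := le_csSup (fidSet_bddAbove hψ₂) hmem₂
  have hT₁ : ∑ k, ∑ s,
      (star (ψ₁ s) ⬝ᵥ ((M k).submatrix (Fin.castAdd d₂) (Fin.castAdd d₂)) *ᵥ ψ₁ s).re
        * (star (ψ₁ s) ⬝ᵥ ((σ k).submatrix (Fin.castAdd d₂) (Fin.castAdd d₂)) *ᵥ ψ₁ s).re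
      ≤ (Fintype.card S₁ : ℝ) * sSup (fidSet ψ₁) := by
    have step : ∑ k, ∑ s,
        (star (ψ₁ s) ⬝ᵥ ((M k).submatrix (Fin.castAdd d₂) (Fin.castAdd d₂)) *ᵥ ψ₁ s).re
          * (star (ψ₁ s) ⬝ᵥ ((σ k).submatrix (Fin.castAdd d₂) (Fin.castAdd d₂)) *ᵥ ψ₁ s).re
        ≤ ∑ k, ∑ s,
        (star (ψ₁ s) ⬝ᵥ ((M k).submatrix (Fin.castAdd d₂) (Fin.castAdd d₂)) *ᵥ ψ₁ s).re
          * (star (ψ₁ s) ⬝ᵥ (τ₁ k) *ᵥ ψ₁ s).re :=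
      Finset.sum_le_sum fun k _ => Finset.sum_le_sum fun s _ =>
        mul_le_mul_of_nonneg_left (hτ₁q k (ψ₁ s)) (quad_re_nonneg ((hM k).submatrix _) (ψ₁ s))
    refine step.trans ?_
    have heq : ∑ k, ∑ s,
        (star (ψ₁ s) ⬝ᵥ ((M k).submatrix (Fin.castAdd d₂) (Fin.castAdd d₂)) *ᵥ ψ₁ s).re
          * (star (ψ₁ s) ⬝ᵥ (τ₁ k) *ᵥ ψ₁ s).re
        = (Fintype.card S₁ : ℝ) * ((1 / (Fintype.card S₁ : ℝ)) * ∑ k, ∑ s,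
        (star (ψ₁ s) ⬝ᵥ ((M k).submatrix (Fin.castAdd d₂) (Fin.castAdd d₂)) *ᵥ ψ₁ s).re
          * (star (ψ₁ s) ⬝ᵥ (τ₁ k) *ᵥ ψ₁ s).re) := by
      field_simp
    rw [heq]
    exact mul_le_mul_of_nonneg_left hF₁ hc₁R.le
  have hT₂ : ∑ k, ∑ s,
      (star (ψ₂ s) ⬝ᵥ ((M k).submatrix (Fin.natAdd d₁) (Fin.natAdd d₁)) *ᵥ ψ₂ s).re
        * (star (ψ₂ s) ⬝ᵥ ((σ k).submatrix (Fin.natAdd d₁) (Fin.natAdd d₁)) *ᵥ ψ₂ s).re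
      ≤ (Fintype.card S₂ : ℝ) * sSup (fidSet ψ₂) := by
    have step : ∑ k, ∑ s,
        (star (ψ₂ s) ⬝ᵥ ((M k).submatrix (Fin.natAdd d₁) (Fin.natAdd d₁)) *ᵥ ψ₂ s).re
          * (star (ψ₂ s) ⬝ᵥ ((σ k).submatrix (Fin.natAdd d₁) (Fin.natAdd d₁)) *ᵥ ψ₂ s).re
        ≤ ∑ k, ∑ s,
        (star (ψ₂ s) ⬝ᵥ ((M k).submatrix (Fin.natAdd d₁) (Fin.natAdd d₁)) *ᵥ ψ₂ s).re
          * (star (ψ₂ s) ⬝ᵥ (τ₂ k) *ᵥ ψ₂ s).re :=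
      Finset.sum_le_sum fun k _ => Finset.sum_le_sum fun s _ =>
        mul_le_mul_of_nonneg_left (hτ₂q k (ψ₂ s)) (quad_re_nonneg ((hM k).submatrix _) (ψ₂ s))
    refine step.trans ?_
    have heq : ∑ k, ∑ s,
        (star (ψ₂ s) ⬝ᵥ ((M k).submatrix (Fin.natAdd d₁) (Fin.natAdd d₁)) *ᵥ ψ₂ s).re
          * (star (ψ₂ s) ⬝ᵥ (τ₂ k) *ᵥ ψ₂ s).re
        = (Fintype.card S₂ : ℝ) * ((1 / (Fintype.card S₂ : ℝ)) * ∑ k, ∑ s,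
        (star (ψ₂ s) ⬝ᵥ ((M k).submatrix (Fin.natAdd d₁) (Fin.natAdd d₁)) *ᵥ ψ₂ s).re
          * (star (ψ₂ s) ⬝ᵥ (τ₂ k) *ᵥ ψ₂ s).re) := by
      field_simp
    rw [heq]
    exact mul_le_mul_of_nonneg_left hF₂ hc₂R.le
  simp only [qinner, Fintype.sum_sum_type, Sum.elim_inl, Sum.elim_inr,
    quad_append_left, quad_append_right]
  rw [Fintype.card_sum, Finset.sum_add_distrib]
  push_cast
  calc (1 / ((Fintype.card S₁ : ℝ) + (Fintype.card S₂ : ℝ)))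
        * (∑ k, ∑ s,
        (star (ψ₁ s) ⬝ᵥ ((M k).submatrix (Fin.castAdd d₂) (Fin.castAdd d₂)) *ᵥ ψ₁ s).re
          * (star (ψ₁ s) ⬝ᵥ ((σ k).submatrix (Fin.castAdd d₂) (Fin.castAdd d₂)) *ᵥ ψ₁ s).re
          + ∑ k, ∑ s,
        (star (ψ₂ s) ⬝ᵥ ((M k).submatrix (Fin.natAdd d₁) (Fin.natAdd d₁)) *ᵥ ψ₂ s).re
          * (star (ψ₂ s) ⬝ᵥ ((σ k).submatrix (Fin.natAdd d₁) (Fin.natAdd d₁)) *ᵥ ψ₂ s).re)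
      ≤ (1 / ((Fintype.card S₁ : ℝ) + (Fintype.card S₂ : ℝ)))
        * ((Fintype.card S₁ : ℝ) * sSup (fidSet ψ₁)
          + (Fintype.card S₂ : ℝ) * sSup (fidSet ψ₂)) := by
        refine mul_le_mul_of_nonneg_left (add_le_add hT₁ hT₂) ?_
        positivity
    _ = ((Fintype.card S₁ : ℝ) * sSup (fidSet ψ₁) + (Fintype.card S₂ : ℝ) * sSup (fidSet ψ₂))
        / ((Fintype.card S₁ : ℝ) + (Fintype.card S₂ : ℝ)) := by
        ring

end Blocks

end MaxFidAux

open MaxFidAux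

theorem maxFidelity_additive {d₁ d₂ N₁ N₂ : ℕ}
    (hd₁ : 0 < d₁) (hd₂ : 0 < d₂) (hN₁ : 0 < N₁) (hN₂ : 0 < N₂)
    (ψ₁ : Fin (N₁ * d₁) → Fin d₁ → ℂ) (ψ₂ : Fin (N₂ * d₂) → Fin d₂ → ℂ)
    (hψ₁ : ∀ s, qinner (ψ₁ s) (ψ₁ s) = 1) (hψ₂ : ∀ s, qinner (ψ₂ s) (ψ₂ s) = 1) :
    sSup (fidSet (Sum.elim (fun s => Fin.append (ψ₁ s) (0 : Fin d₂ → ℂ))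
        (fun s => Fin.append (0 : Fin d₁ → ℂ) (ψ₂ s))))
      = ((N₁ * d₁ : ℝ) * sSup (fidSet ψ₁) + (N₂ * d₂ : ℝ) * sSup (fidSet ψ₂))
          / ((N₁ * d₁ : ℝ) + (N₂ * d₂ : ℝ)) := by
  have hΨunit : ∀ s, qinner ((Sum.elim (fun s => Fin.append (ψ₁ s) (0 : Fin d₂ → ℂ))
      (fun s => Fin.append (0 : Fin d₁ → ℂ) (ψ₂ s))) s)
      ((Sum.elim (fun s => Fin.append (ψ₁ s) (0 : Fin d₂ → ℂ))
      (fun s => Fin.append (0 : Fin d₁ → ℂ) (ψ₂ s))) s) = 1 := by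
    rintro (s | s)
    · simp only [Sum.elim_inl]
      rw [qinner, dot_append_left, ← qinner, hψ₁ s]
    · simp only [Sum.elim_inr]
      rw [qinner, dot_append_right, ← qinner, hψ₂ s]
  have hcard₁ : 0 < Fintype.card (Fin (N₁ * d₁)) := by
    simp only [Fintype.card_fin]
    exact Nat.mul_pos hN₁ hd₁
  have hcard₂ : 0 < Fintype.card (Fin (N₂ * d₂)) := by
    simp only [Fintype.card_fin]
    exact Nat.mul_pos hN₂ hd₂
  have hc₁R : (0:ℝ) < (N₁ * d₁ : ℝ) := by
    have := Nat.mul_pos hN₁ hd₁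
    exact_mod_cast this
  have hc₂R : (0:ℝ) < (N₂ * d₂ : ℝ) := by
    have := Nat.mul_pos hN₂ hd₂
    exact_mod_cast this
  have hcR : (0:ℝ) < (N₁ * d₁ : ℝ) + (N₂ * d₂ : ℝ) := by linarith
  have hbddC : BddAbove (fidSet (Sum.elim (fun s => Fin.append (ψ₁ s) (0 : Fin d₂ → ℂ))
      (fun s => Fin.append (0 : Fin d₁ → ℂ) (ψ₂ s)))) := fidSet_bddAbove hΨunit
  have hne₁ : (fidSet ψ₁).Nonempty := fidSet_nonempty hd₁ ψ₁
  have hne₂ : (fidSet ψ₂).Nonempty := fidSet_nonempty hd₂ ψ₂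
  have hneC : (fidSet (Sum.elim (fun s => Fin.append (ψ₁ s) (0 : Fin d₂ → ℂ))
      (fun s => Fin.append (0 : Fin d₁ → ℂ) (ψ₂ s)))).Nonempty :=
    fidSet_nonempty (Nat.add_pos_left hd₁ d₂) _
  apply le_antisymm
  · apply csSup_le hneC
    intro x hx
    have h := mem_le_bound hd₁ hd₂ hcard₁ hcard₂ hψ₁ hψ₂ hx
    simp only [Fintype.card_fin] at h
    push_cast at h ⊢
    exact h
  · refine le_of_forall_pos_le_add fun ε hε => ?_
    obtain ⟨x₁, hx₁mem, hx₁⟩ := exists_lt_of_lt_csSup hne₁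
      (show sSup (fidSet ψ₁) - ε < sSup (fidSet ψ₁) by linarith)
    obtain ⟨x₂, hx₂mem, hx₂⟩ := exists_lt_of_lt_csSup hne₂
      (show sSup (fidSet ψ₂) - ε < sSup (fidSet ψ₂) by linarith)
    have hmem := combo_mem hcard₁ hcard₂ hx₁mem hx₂mem
    have hle := le_csSup hbddC hmem
    simp only [Fintype.card_fin] at hle
    push_cast at hle ⊢
    have h1 : ((N₁:ℝ) * d₁ * sSup (fidSet ψ₁) + (N₂:ℝ) * d₂ * sSup (fidSet ψ₂))
        ≤ ((N₁:ℝ) * d₁ * x₁ + (N₂:ℝ) * d₂ * x₂) + ε * ((N₁:ℝ) * d₁ + (N₂:ℝ) * d₂) := by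
      push_cast at hc₁R hc₂R
      nlinarith [hx₁, hx₂, hc₁R, hc₂R]
    calc ((N₁:ℝ) * d₁ * sSup (fidSet ψ₁) + (N₂:ℝ) * d₂ * sSup (fidSet ψ₂))
          / ((N₁:ℝ) * d₁ + (N₂:ℝ) * d₂)
        ≤ (((N₁:ℝ) * d₁ * x₁ + (N₂:ℝ) * d₂ * x₂) + ε * ((N₁:ℝ) * d₁ + (N₂:ℝ) * d₂))
          / ((N₁:ℝ) * d₁ + (N₂:ℝ) * d₂) := by
          have hc' : (0:ℝ) < (N₁:ℝ) * d₁ + (N₂:ℝ) * d₂ := by push_cast at hcR; linarith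
          exact (div_le_div_iff_of_pos_right hc').mpr h1
      _ = ((N₁:ℝ) * d₁ * x₁ + (N₂:ℝ) * d₂ * x₂) / ((N₁:ℝ) * d₁ + (N₂:ℝ) * d₂) + ε := by
          rw [add_div, mul_div_assoc]
          have : ((N₁:ℝ) * d₁ + (N₂:ℝ) * d₂) / ((N₁:ℝ) * d₁ + (N₂:ℝ) * d₂) = 1 := by
            push_cast at hcR
            field_simp
          rw [this, mul_one]
      _ ≤ sSup (fidSet (Sum.elim (fun s => Fin.append (ψ₁ s) (0 : Fin d₂ → ℂ))
            (fun s => Fin.append (0 : Fin d₁ → ℂ) (ψ₂ s)))) + ε := by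
          exact add_le_add_left hle ε
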